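/- In the generalised Catalan model with k variables, the number of leaf-labellings of n leaves having at least r repetitions among d marked pattern leaves is at most 2^n·k^{n−r}·Σ_{j=1}^{r} C(d, r+j)·S(r+j, j), where a repetition count r among d leaves means d minus the number of distinct variables used on those leaves is at least r. -/

import Mathlib

/-- Stirling numbers of the second kind. -/
def stirling : ℕ → ℕ → ℕ
  | 0, 0 => 1
  | 0, _ + 1 => 0
  | _ + 1, 0 => 0
  | n + 1, p + 1 => (p + 1) * stirling n (p + 1) + stirling n p

open Finset
lemma card_filter_equiv' {α β : Type*} [Fintype α] [Fintype β]
    (e : β ≃ α) (P : α → Prop) [DecidablePred P] :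
    (Finset.univ.filter P).card = (Finset.univ.filter fun b => P (e b)).card := by
  rw [← Fintype.card_subtype, ← Fintype.card_subtype]
  exact (Fintype.card_congr ((e.subtypeEquiv fun b => Iff.rfl))).symm

lemma image_cons_univ {m k : ℕ} (x : Fin k) (h : Fin m → Fin k) :
    Finset.univ.image (Fin.cons x h : Fin (m+1) → Fin k) = insert x (Finset.univ.image h) := by
  rw [Fin.univ_succ]
  simp only [Finset.cons_eq_insert, Finset.image_insert, Fin.cons_zero, Finset.map_eq_image,
    Finset.image_image]
  congr 1

lemma stirling_bound (k : ℕ) : ∀ m j : ℕ,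
    ((Finset.univ : Finset (Fin m → Fin k)).filter
        fun h => (Finset.univ.image h).card = j).card ≤ stirling m j * k ^ j := by
  intro m
  induction m with
  | zero =>
    intro j
    cases j with
    | zero =>
      simp only [stirling, pow_zero, mul_one]
      apply le_of_eq
      rw [Finset.filter_true_of_mem (by simp)]
      simp
    | succ j => simp [stirling]
  | succ m ih =>
    intro j
    rw [card_filter_equiv' (Fin.consEquiv (fun _ : Fin (m+1) => Fin k))]
    cases j with
    | zero =>
      have hempty : (Finset.univ.filter fun p : Fin k × (Fin m → Fin k) =>
          (Finset.univ.image ((Fin.consEquiv fun _ => Fin k) p)).card = 0) = ∅ := by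
        ext ⟨x, h⟩
        simp [Fin.consEquiv, image_cons_univ, Finset.card_eq_zero]
      rw [hempty]
      simp
    | succ jj =>
      have key : ∀ p : Fin k × (Fin m → Fin k),
          (Finset.univ.image ((Fin.consEquiv fun _ => Fin k) p)) =
            insert p.1 (Finset.univ.image p.2) := by
        rintro ⟨x, h⟩
        simp [Fin.consEquiv, image_cons_univ]
      calc (Finset.univ.filter fun p : Fin k × (Fin m → Fin k) =>
              (Finset.univ.image ((Fin.consEquiv fun _ => Fin k) p)).card = jj + 1).card
          = ∑ p : Fin k × (Fin m → Fin k),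
              if (insert p.1 (Finset.univ.image p.2)).card = jj + 1 then 1 else 0 := by
            rw [Finset.card_filter]
            exact Finset.sum_congr rfl fun p _ => by rw [key p]
        _ = ∑ h : Fin m → Fin k, ∑ x : Fin k,
              if (insert x (Finset.univ.image h)).card = jj + 1 then 1 else 0 := by
            rw [Fintype.sum_prod_type_right]
        _ ≤ ∑ h : Fin m → Fin k,
              ((if (Finset.univ.image h).card = jj + 1 then jj + 1 else 0)
                + (if (Finset.univ.image h).card = jj then k else 0)) := by
            apply Finset.sum_le_sum
            intro h _
            set S := Finset.univ.image h with hS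
            calc (∑ x : Fin k, if (insert x S).card = jj + 1 then 1 else 0)
                ≤ ∑ x : Fin k, ((if x ∈ S ∧ S.card = jj + 1 then 1 else 0)
                    + (if x ∉ S ∧ S.card = jj then 1 else 0)) := by
                  apply Finset.sum_le_sum
                  intro x _
                  by_cases hx : x ∈ S
                  · rw [Finset.card_insert_of_mem hx]
                    by_cases hc : S.card = jj + 1 <;> simp [hx, hc]
                  · rw [Finset.card_insert_of_notMem hx]
                    by_cases hc : S.card = jj <;> simp [hx, hc]
              _ = (∑ x : Fin k, if x ∈ S ∧ S.card = jj + 1 then 1 else 0)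
                  + ∑ x : Fin k, (if x ∉ S ∧ S.card = jj then 1 else 0) :=
                  Finset.sum_add_distrib
              _ ≤ _ := by
                  gcongr
                  · by_cases hc : S.card = jj + 1
                    · simp only [hc, and_true]
                      rw [← hc]
                      simp [Finset.sum_ite_mem]
                    · simp [hc]
                  · by_cases hc : S.card = jj
                    · simp only [hc, and_true, if_pos]
                      calc (∑ x : Fin k, if x ∉ S then 1 else 0)
                          ≤ ∑ _x : Fin k, 1 := Finset.sum_le_sum fun x _ => by split <;> omega
                        _ = k := by simp
                    · simp [hc]
        _ = (jj + 1) * (Finset.univ.filter fun h : Fin m → Fin k =>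
                (Finset.univ.image h).card = jj + 1).card
            + k * (Finset.univ.filter fun h : Fin m → Fin k =>
                (Finset.univ.image h).card = jj).card := by
            rw [Finset.sum_add_distrib]
            congr 1 <;>
              rw [Finset.card_filter, Finset.mul_sum] <;>
              exact Finset.sum_congr rfl fun h _ => by split <;> simp
        _ ≤ (jj + 1) * (stirling m (jj + 1) * k ^ (jj + 1)) + k * (stirling m jj * k ^ jj) := by
            gcongr <;> exact ih _
        _ = stirling (m + 1) (jj + 1) * k ^ (jj + 1) := by
            show _ = ((jj + 1) * stirling m (jj + 1) + stirling m jj) * k ^ (jj + 1)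
            ring

lemma filter_fst_card' {A B : Type*} [Fintype A] [Fintype B]
    (Q : A → Prop) [DecidablePred Q] :
    (Finset.univ.filter fun p : A × B => Q p.1).card
      = (Finset.univ.filter Q).card * Fintype.card B := by
  rw [Finset.card_filter, Fintype.sum_prod_type, Finset.card_filter, Finset.sum_mul]
  refine Finset.sum_congr rfl fun a _ => ?_
  by_cases h : Q a <;> simp [h, Finset.card_univ]

lemma image_eq_attach_image {n k : ℕ} (T : Finset (Fin n)) (g : Fin n → Fin k) :
    T.image g = Finset.univ.image (fun x : {x // x ∈ T} => g x.1) := by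
  conv_lhs => rw [← Finset.attach_image_val (s := T)]
  rw [Finset.image_image, Finset.univ_eq_attach]
  rfl

lemma count_image_card (n k j : ℕ) (T : Finset (Fin n)) :
    (Finset.univ.filter fun g : Fin n → Fin k => (T.image g).card = j).card
      ≤ stirling T.card j * k ^ j * k ^ (n - T.card) := by
  classical
  rw [card_filter_equiv' (Equiv.piEquivPiSubtypeProd (· ∈ T) fun _ => Fin k).symm]
  have key : ∀ p : ({x : Fin n // x ∈ T} → Fin k) × ({x : Fin n // ¬ x ∈ T} → Fin k),
      (T.image ((Equiv.piEquivPiSubtypeProd (· ∈ T) fun _ => Fin k).symm p)).card =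
        (Finset.univ.image p.1).card := by
    intro p
    rw [image_eq_attach_image]
    congr 1
    refine Finset.image_congr fun x _ => ?_
    simp [Equiv.piEquivPiSubtypeProd, x.2]
  rw [Finset.filter_congr fun p _ => by rw [key p]]
  rw [filter_fst_card' (fun h : {x : Fin n // x ∈ T} → Fin k => (Finset.univ.image h).card = j)]
  have hcomp : Fintype.card ({x : Fin n // ¬ x ∈ T} → Fin k) = k ^ (n - T.card) := by
    rw [Fintype.card_fun, Fintype.card_fin]
    congr 1
    rw [Fintype.card_subtype_compl, Fintype.card_fin, Fintype.card_coe]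
  rw [hcomp]
  apply Nat.mul_le_mul_right
  -- transfer to Fin T.card
  have eT : {x : Fin n // x ∈ T} ≃ Fin T.card := Fintype.equivFinOfCardEq (Fintype.card_coe T)
  rw [card_filter_equiv' (Equiv.arrowCongr eT.symm (Equiv.refl (Fin k)))]
  have key2 : ∀ f : Fin T.card → Fin k,
      (Finset.univ.image ((Equiv.arrowCongr eT.symm (Equiv.refl (Fin k))) f)) =
        Finset.univ.image f := by
    intro f
    have : ((Equiv.arrowCongr eT.symm (Equiv.refl (Fin k))) f) = f ∘ eT := by
      funext x; simp [Equiv.arrowCongr]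
    rw [this, ← Finset.image_image, Finset.image_univ_of_surjective eT.surjective]
  rw [Finset.filter_congr fun f _ => by rw [key2 f]]
  exact stirling_bound k T.card j

lemma exists_subset_excess {n k : ℕ} (g : Fin n → Fin k) :
    ∀ (S : Finset (Fin n)) (r : ℕ), (S.image g).card + r ≤ S.card →
      ∃ T ⊆ S, (T.image g).card + r = T.card := by
  intro S
  induction S using Finset.strongInduction with
  | _ S ih =>
    intro r hle
    rcases eq_or_lt_of_le hle with h | h
    · exact ⟨S, Finset.Subset.refl S, h⟩
    · have hne : S.Nonempty := by
        rw [← Finset.card_pos]; omega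
      obtain ⟨x, hx⟩ := hne
      have hsub : S.erase x ⊂ S := Finset.erase_ssubset hx
      have h1 : ((S.erase x).image g).card ≤ (S.image g).card :=
        Finset.card_le_card (Finset.image_subset_image (Finset.erase_subset _ _))
      have h2 : (S.erase x).card = S.card - 1 := Finset.card_erase_of_mem hx
      obtain ⟨T, hT, hT2⟩ := ih (S.erase x) hsub r (by omega)
      exact ⟨T, hT.trans (Finset.erase_subset _ _), hT2⟩

lemma exists_witness {n k : ℕ} (g : Fin n → Fin k) (D : Finset (Fin n)) (r : ℕ)
    (hr : 1 ≤ r) (hle : (D.image g).card + r ≤ D.card) :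
    ∃ j T, T ⊆ D ∧ T.card = r + j ∧ (T.image g).card = j ∧ 1 ≤ j ∧ j ≤ r := by
  classical
  obtain ⟨T, hTD, hT⟩ := exists_subset_excess g D r hle
  set T₂ := T.filter (fun x => ∃ y ∈ T, y ≠ x ∧ g y = g x) with hT₂def
  have hsub : T₂ ⊆ T := Finset.filter_subset _ _
  have himgsub : T₂.image g ⊆ T.image g := Finset.image_subset_image hsub
  have hcard : (T \ T₂).card = ((T.image g) \ (T₂.image g)).card := by
    apply Finset.card_bij (fun x _ => g x)
    · intro x hx
      rw [Finset.mem_sdiff] at hx ⊢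
      obtain ⟨hxT, hxT₂⟩ := hx
      refine ⟨Finset.mem_image_of_mem g hxT, ?_⟩
      intro hmem
      rw [Finset.mem_image] at hmem
      obtain ⟨y, hy, hgy⟩ := hmem
      have hyT := hsub hy
      by_cases hyx : y = x
      · subst hyx; exact hxT₂ hy
      · exact hxT₂ (Finset.mem_filter.mpr ⟨hxT, ⟨y, hyT, hyx, hgy⟩⟩)
    · intro x hx y hy hgxy
      by_contra hne
      rw [Finset.mem_sdiff] at hx hy
      exact hx.2 (Finset.mem_filter.mpr ⟨hx.1, ⟨y, hy.1, fun h => hne h.symm, hgxy.symm⟩⟩)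
    · intro v hv
      rw [Finset.mem_sdiff, Finset.mem_image] at hv
      obtain ⟨⟨x, hxT, rfl⟩, hv2⟩ := hv
      exact ⟨x, Finset.mem_sdiff.mpr ⟨hxT, fun hx₂ => hv2 (Finset.mem_image_of_mem g hx₂)⟩, rfl⟩
  have hc1 : (T \ T₂).card = T.card - T₂.card := Finset.card_sdiff_of_subset hsub
  have hc2 : ((T.image g) \ (T₂.image g)).card = (T.image g).card - (T₂.image g).card :=
    Finset.card_sdiff_of_subset himgsub
  have hle1 : T₂.card ≤ T.card := Finset.card_le_card hsub
  have hle2 : (T₂.image g).card ≤ (T.image g).card := Finset.card_le_card himgsub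
  have hle3 : (T₂.image g).card ≤ T₂.card := Finset.card_image_le
  have heq2 : (T₂.image g).card + r = T₂.card := by omega
  set j := (T₂.image g).card with hj
  have h2j : 2 * j ≤ T₂.card := by
    apply Finset.mul_card_image_le_card
    intro b hb
    rw [Finset.mem_image] at hb
    obtain ⟨x, hx, rfl⟩ := hb
    have hx' := Finset.mem_filter.mp hx
    obtain ⟨hxT, y, hyT, hyx, hgy⟩ := hx'
    have hyT₂ : y ∈ T₂ := Finset.mem_filter.mpr ⟨hyT, ⟨x, hxT, fun h => hyx h.symm, hgy.symm⟩⟩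
    refine Finset.one_lt_card.mpr ⟨x, ?_, y, ?_, fun h => hyx h.symm⟩
    · exact Finset.mem_filter.mpr ⟨hx, rfl⟩
    · exact Finset.mem_filter.mpr ⟨hyT₂, hgy⟩
  have hj1 : 1 ≤ j := by
    by_contra h0
    have hj0 : j = 0 := by omega
    have : T₂ = ∅ := by
      rw [← Finset.image_eq_empty (f := g)]
      exact Finset.card_eq_zero.mp hj0
    rw [this] at heq2
    simp at heq2
    omega
  exact ⟨j, T₂, hsub.trans hTD, by omega, rfl, hj1, by omega⟩

lemma main_count (n k d r : ℕ) (hr : 1 ≤ r) (D : Finset (Fin n)) (hD : D.card = d) :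
    (Finset.univ.filter fun g : Fin n → Fin k => r ≤ d - (D.image g).card).card ≤
      k ^ (n - r) * ∑ j ∈ Finset.Icc 1 r, Nat.choose d (r + j) * stirling (r + j) j := by
  classical
  have hdn : d ≤ n := by
    rw [← hD]
    calc D.card ≤ Fintype.card (Fin n) := Finset.card_le_univ D
      _ = n := Fintype.card_fin n
  have hsubset : (Finset.univ.filter fun g : Fin n → Fin k => r ≤ d - (D.image g).card) ⊆
      (Finset.Icc 1 r).biUnion fun j => (D.powersetCard (r + j)).biUnion fun T =>
        Finset.univ.filter fun g => (T.image g).card = j := by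
    intro g hg
    rw [Finset.mem_filter] at hg
    have himle : (D.image g).card ≤ D.card := Finset.card_image_le
    have hle : (D.image g).card + r ≤ D.card := by omega
    obtain ⟨j, T, hTD, hTcard, hTimg, hj1, hjr⟩ := exists_witness g D r hr hle
    exact Finset.mem_biUnion.mpr ⟨j, Finset.mem_Icc.mpr ⟨hj1, hjr⟩,
      Finset.mem_biUnion.mpr ⟨T, Finset.mem_powersetCard.mpr ⟨hTD, hTcard⟩,
      Finset.mem_filter.mpr ⟨Finset.mem_univ g, hTimg⟩⟩⟩
  calc (Finset.univ.filter fun g : Fin n → Fin k => r ≤ d - (D.image g).card).card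
      ≤ ((Finset.Icc 1 r).biUnion fun j => (D.powersetCard (r + j)).biUnion fun T =>
          Finset.univ.filter fun g : Fin n → Fin k => (T.image g).card = j).card :=
        Finset.card_le_card hsubset
    _ ≤ ∑ j ∈ Finset.Icc 1 r, ((D.powersetCard (r + j)).biUnion fun T =>
          Finset.univ.filter fun g : Fin n → Fin k => (T.image g).card = j).card :=
        Finset.card_biUnion_le
    _ ≤ ∑ j ∈ Finset.Icc 1 r, ∑ T ∈ D.powersetCard (r + j),
          (Finset.univ.filter fun g : Fin n → Fin k => (T.image g).card = j).card :=
        Finset.sum_le_sum fun j _ => Finset.card_biUnion_le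
    _ ≤ ∑ j ∈ Finset.Icc 1 r, ∑ T ∈ D.powersetCard (r + j),
          stirling (r + j) j * k ^ j * k ^ (n - (r + j)) := by
        refine Finset.sum_le_sum fun j _ => Finset.sum_le_sum fun T hT => ?_
        have hTcard : T.card = r + j := (Finset.mem_powersetCard.mp hT).2
        have := count_image_card n k j T
        rwa [hTcard] at this
    _ = ∑ j ∈ Finset.Icc 1 r, Nat.choose d (r + j) *
          (stirling (r + j) j * k ^ j * k ^ (n - (r + j))) := by
        refine Finset.sum_congr rfl fun j _ => ?_
        rw [Finset.sum_const, Finset.card_powersetCard, hD, smul_eq_mul]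
    _ ≤ ∑ j ∈ Finset.Icc 1 r, k ^ (n - r) * (Nat.choose d (r + j) * stirling (r + j) j) := by
        refine Finset.sum_le_sum fun j _ => ?_
        by_cases hcase : r + j ≤ d
        · have hrn : r + j ≤ n := le_trans hcase hdn
          have : k ^ j * k ^ (n - (r + j)) = k ^ (n - r) := by
            rw [← pow_add]
            congr 1
            omega
          calc Nat.choose d (r + j) * (stirling (r + j) j * k ^ j * k ^ (n - (r + j)))
              = Nat.choose d (r + j) * (stirling (r + j) j * (k ^ j * k ^ (n - (r + j)))) := by
                ring
            _ = k ^ (n - r) * (Nat.choose d (r + j) * stirling (r + j) j) := by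
                rw [this]; ring
            _ ≤ _ := le_refl _
        · rw [Nat.choose_eq_zero_of_lt (by omega)]
          simp
    _ = k ^ (n - r) * ∑ j ∈ Finset.Icc 1 r, Nat.choose d (r + j) * stirling (r + j) j := by
        rw [Finset.mul_sum]

/-- In the generalised Catalan model with `k` variables, the number of leaf-labellings
(by literals, i.e. a variable in `Fin k` and a polarity) of `n` leaves having at least `r`
repetitions among the `d` marked pattern leaves `D` — where the number of repetitions is
`d` minus the number of distinct variables appearing on the marked leaves — is at most
`2^n · k^{n−r} · Σ_{j=1}^{r} C(d, r+j) · S(r+j, j)`. -/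
theorem stmt15 (n k d r : ℕ) (hr : 1 ≤ r) (hrn : r ≤ n)
    (D : Finset (Fin n)) (hD : D.card = d) :
    (Finset.univ.filter fun f : Fin n → Fin k × Bool =>
        r ≤ d - (D.image fun i => (f i).1).card).card ≤
      2 ^ n * k ^ (n - r) *
        ∑ j ∈ Finset.Icc 1 r, Nat.choose d (r + j) * stirling (r + j) j := by
  classical
  rw [card_filter_equiv' (Equiv.arrowProdEquivProdArrow (Fin n) (fun _ => Fin k) (fun _ => Bool)).symm]
  have key : ∀ p : (Fin n → Fin k) × (Fin n → Bool),
      (D.image fun i => (((Equiv.arrowProdEquivProdArrow (Fin n) (fun _ => Fin k) (fun _ => Bool)).symm p) i).1) =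
        D.image p.1 := by
    intro p
    refine Finset.image_congr fun i _ => ?_
    simp [Equiv.arrowProdEquivProdArrow]
  rw [Finset.filter_congr fun p _ => by rw [key p]]
  rw [filter_fst_card' (fun g : Fin n → Fin k => r ≤ d - (D.image g).card)]
  have hbool : Fintype.card (Fin n → Bool) = 2 ^ n := by
    rw [Fintype.card_fun, Fintype.card_bool, Fintype.card_fin]
  rw [hbool]
  calc (Finset.univ.filter fun g : Fin n → Fin k => r ≤ d - (D.image g).card).card * 2 ^ n
      ≤ (k ^ (n - r) * ∑ j ∈ Finset.Icc 1 r, Nat.choose d (r + j) * stirling (r + j) j) * 2 ^ n :=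
        Nat.mul_le_mul_right _ (main_count n k d r hr D hD)
    _ = 2 ^ n * k ^ (n - r) * ∑ j ∈ Finset.Icc 1 r, Nat.choose d (r + j) * stirling (r + j) j := by
        ring
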